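/- For t = 0, the element ω := (i/2)(φ1∧φ̄1 + φ2∧φ̄2 + φ3∧φ̄3) ∈ Λ^{1,1} satisfies ∂_0∂̄_0(ω) = 0 and ∂_0∂̄_0(ω∧ω) = 0. (That is, the standard invariant Hermitian metric on the Calabi–Eckmann manifold S³×S³ is both SKT and Gauduchon.) -/
import Mathlib


open Complex

noncomputable section

/-- The 64-dimensional exterior algebra on six generators, modelled as
functions from subsets of `Fin 6` to `ℂ`. The generators `φ 0, φ 1, φ 2`
represent `φ1, φ2, φ3` (bidegree `(1,0)`) and `φ 3, φ 4, φ 5` represent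
`φ̄1, φ̄2, φ̄3` (bidegree `(0,1)`). -/
abbrev Lam : Type := Finset (Fin 6) → ℂ

/-- Basis monomial indexed by a subset of the generators. -/
def mon (S : Finset (Fin 6)) : Lam := Pi.single S 1

/-- The generators. -/
def φ (j : Fin 6) : Lam := mon {j}

/-- The Koszul sign. -/
def wsign (T U : Finset (Fin 6)) : ℂ :=
  (-1 : ℂ) ^ (((T ×ˢ U).filter fun p => p.2 < p.1).card)

/-- The wedge product. -/
def wedge (x y : Lam) : Lam :=
  fun S => ∑ T ∈ S.powerset, wsign T (S \ T) * x T * y (S \ T)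

infixr:70 " ⋏ " => wedge

/-- The bidegree-`(p,q)` component `Λ^{p,q}`. -/
def Lpq (p q : ℕ) : Submodule ℂ Lam where
  carrier := {x | ∀ S : Finset (Fin 6),
    ¬((S.filter fun i : Fin 6 => (i : ℕ) < 3).card = p ∧ (S.filter fun i : Fin 6 => 3 ≤ (i : ℕ)).card = q) →
      x S = 0}
  add_mem' := by intro a b ha hb S hS; simp [ha S hS, hb S hS]
  zero_mem' := by intro S _; rfl
  smul_mem' := by intro c x hx S hS; simp [hx S hS]

/-- The total-degree-`k` component. -/
def Ldeg (k : ℕ) : Submodule ℂ Lam where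
  carrier := {x | ∀ S : Finset (Fin 6), S.card ≠ k → x S = 0}
  add_mem' := by intro a b ha hb S hS; simp [ha S hS, hb S hS]
  zero_mem' := by intro S _; rfl
  smul_mem' := by intro c x hx S hS; simp [hx S hS]

/-- `D` is a graded derivation of bidegree `(a,b)`: it maps `Λ^{p,q}` to `Λ^{p+a,q+b}` and
satisfies the graded Leibniz rule with the sign of the total degree. -/
def IsDer (D : Lam →ₗ[ℂ] Lam) (a b : ℕ) : Prop :=
  (∀ p q : ℕ, ∀ x ∈ Lpq p q, D x ∈ Lpq (p + a) (q + b)) ∧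
  (∀ k : ℕ, ∀ x ∈ Ldeg k, ∀ y : Lam,
    D (x ⋏ y) = (D x) ⋏ y + ((-1 : ℂ)) ^ k • (x ⋏ D y))

/-- `D` is the operator `∂_t` : the graded derivation of bidegree `(1,0)` determined on the
generators by the structure equations of the deformed Calabi–Eckmann structure `J_t`
(the values on the conjugate generators `φ 3, φ 4, φ 5` being obtained
by applying the conjugation `σ` to the values of `∂̄_t`). -/
def IsDelT (t : ℂ) (D : Lam →ₗ[ℂ] Lam) : Prop :=
  IsDer D 1 0 ∧
  D (φ 0) = (Complex.I * ((starRingEnd ℂ) t + 1) / (1 - Complex.normSq t)) • (φ 0 ⋏ φ 2) ∧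
  D (φ 1) = ((1 - (starRingEnd ℂ) t) / (1 - Complex.normSq t)) • (φ 1 ⋏ φ 2) ∧
  D (φ 2) = 0 ∧
  D (φ 3) = (-(Complex.I * ((starRingEnd ℂ) t + 1)) / (1 - Complex.normSq t)) • (φ 3 ⋏ φ 2) ∧
  D (φ 4) = (((starRingEnd ℂ) t - 1) / (1 - Complex.normSq t)) • (φ 4 ⋏ φ 2) ∧
  D (φ 5) = ((starRingEnd ℂ) t + Complex.I) • (φ 3 ⋏ φ 0) + ((starRingEnd ℂ) t + 1) • (φ 4 ⋏ φ 1)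

/-- `Db` is the operator `∂̄_t`. -/
def IsDelBarT (t : ℂ) (Db : Lam →ₗ[ℂ] Lam) : Prop :=
  IsDer Db 0 1 ∧
  Db (φ 0) = (Complex.I * (t + 1) / (1 - Complex.normSq t)) • (φ 0 ⋏ φ 5) ∧
  Db (φ 1) = ((t - 1) / (1 - Complex.normSq t)) • (φ 1 ⋏ φ 5) ∧
  Db (φ 2) = (t - Complex.I) • (φ 0 ⋏ φ 3) + (t + 1) • (φ 1 ⋏ φ 4) ∧
  Db (φ 3) = (-(Complex.I * (t + 1)) / (1 - Complex.normSq t)) • (φ 3 ⋏ φ 5) ∧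
  Db (φ 4) = ((1 - t) / (1 - Complex.normSq t)) • (φ 4 ⋏ φ 5) ∧
  Db (φ 5) = 0

/-- The Bott–Chern cocycles in bidegree `(p,q)` : `Ker ∂ ∩ Ker ∂̄ ∩ Λ^{p,q}`. -/
def Kbc (D Db : Lam →ₗ[ℂ] Lam) (p q : ℕ) : Submodule ℂ Lam :=
  LinearMap.ker D ⊓ LinearMap.ker Db ⊓ Lpq p q

/-- The Bott–Chern coboundaries in bidegree `(p,q)` : `∂∂̄(Λ^{p-1,q-1})`
(zero when `p = 0` or `q = 0`). -/
def Ibc (D Db : Lam →ₗ[ℂ] Lam) (p q : ℕ) : Submodule ℂ Lam :=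
  if p = 0 ∨ q = 0 then ⊥ else Submodule.map (D ∘ₗ Db) (Lpq (p - 1) (q - 1))

/-- The Aeppli cocycles in bidegree `(p,q)` : `Ker (∂∂̄) ∩ Λ^{p,q}`. -/
def Ka (D Db : Lam →ₗ[ℂ] Lam) (p q : ℕ) : Submodule ℂ Lam :=
  LinearMap.ker (D ∘ₗ Db) ⊓ Lpq p q

/-- The Aeppli coboundaries in bidegree `(p,q)` : `∂(Λ^{p-1,q}) + ∂̄(Λ^{p,q-1})`. -/
def Ia (D Db : Lam →ₗ[ℂ] Lam) (p q : ℕ) : Submodule ℂ Lam :=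
  (if p = 0 then ⊥ else Submodule.map D (Lpq (p - 1) q)) ⊔
  (if q = 0 then ⊥ else Submodule.map Db (Lpq p (q - 1)))

end

noncomputable section

/-- The fundamental form `ω = (i/2)(φ1∧φ̄1 + φ2∧φ̄2 + φ3∧φ̄3)` of the standard invariant
Hermitian metric. -/
def ω : Lam := (Complex.I / 2) • (φ 0 ⋏ φ 3 + φ 1 ⋏ φ 4 + φ 2 ⋏ φ 5)

lemma add_wedge (x y z : Lam) : (x + y) ⋏ z = x ⋏ z + y ⋏ z := by
  funext S
  simp [wedge, add_mul, mul_add, Finset.sum_add_distrib]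

lemma wedge_add (x y z : Lam) : x ⋏ (y + z) = x ⋏ y + x ⋏ z := by
  funext S
  simp [wedge, mul_add, Finset.sum_add_distrib]

lemma smul_wedge (c : ℂ) (x y : Lam) : (c • x) ⋏ y = c • (x ⋏ y) := by
  funext S
  simp [wedge, Finset.mul_sum]
  exact Finset.sum_congr rfl fun T _ => by ring

lemma wedge_smul (c : ℂ) (x y : Lam) : x ⋏ (c • y) = c • (x ⋏ y) := by
  funext S
  simp [wedge, Finset.mul_sum]
  exact Finset.sum_congr rfl fun T _ => by ring

lemma zero_wedge (y : Lam) : (0 : Lam) ⋏ y = 0 := by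
  funext S; simp [wedge]

lemma wedge_zero (x : Lam) : x ⋏ (0 : Lam) = 0 := by
  funext S; simp [wedge]

lemma neg_wedge (x y : Lam) : (-x) ⋏ y = -(x ⋏ y) := by
  funext S; simp [wedge, Finset.sum_neg_distrib]

lemma wedge_neg (x y : Lam) : x ⋏ (-y) = -(x ⋏ y) := by
  funext S; simp [wedge, Finset.sum_neg_distrib]

lemma mon_mem_Ldeg {T : Finset (Fin 6)} {k : ℕ} (h : T.card = k) : mon T ∈ Ldeg k := by
  intro S hS
  simp only [mon, Pi.single_apply]
  rw [if_neg]
  rintro rfl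
  exact hS h

lemma mon_wedge_mon {T U : Finset (Fin 6)} (h : Disjoint T U) :
    mon T ⋏ mon U = wsign T U • mon (T ∪ U) := by
  funext S
  simp only [wedge, mon, Pi.single_apply, Pi.smul_apply, smul_eq_mul]
  by_cases hTS : T ⊆ S
  · rw [Finset.sum_eq_single_of_mem T (Finset.mem_powerset.mpr hTS)]
    · rw [if_pos rfl, mul_one]
      by_cases hS : S = T ∪ U
      · subst hS
        rw [Finset.union_sdiff_cancel_left h, if_pos rfl, if_pos rfl]
      · have h1 : S \ T ≠ U := by
          intro hU
          exact hS (by rw [← hU, Finset.union_sdiff_of_subset hTS])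
        rw [if_neg h1, if_neg hS, mul_zero, mul_zero]
    · intro b _ hbT
      rw [if_neg hbT, mul_zero, zero_mul]
  · rw [Finset.sum_eq_zero, if_neg, mul_zero]
    · intro hS; exact hTS (hS ▸ Finset.subset_union_left)
    · intro b hb
      rcases eq_or_ne b T with rfl | hbT
      · exact absurd (Finset.mem_powerset.mp hb) hTS
      · rw [if_neg hbT, mul_zero, zero_mul]

lemma mon_wedge_mon_zero {T U : Finset (Fin 6)} (h : ¬ Disjoint T U) :
    mon T ⋏ mon U = 0 := by
  funext S
  simp only [wedge, mon, Pi.single_apply]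
  rw [Finset.sum_eq_zero]
  · rfl
  · intro b _
    rcases eq_or_ne b T with rfl | hbT
    · rw [if_pos rfl, mul_one, if_neg, mul_zero]
      intro hU
      exact h (hU ▸ Finset.disjoint_sdiff)
    · rw [if_neg hbT, mul_zero, zero_mul]

lemma mwp {T U V : Finset (Fin 6)} (hd : ∀ x ∈ T, x ∉ U) (hu : T ∪ U = V)
    (he : Even ((T ×ˢ U).filter fun p => p.2 < p.1).card) :
    mon T ⋏ mon U = mon V := by
  rw [mon_wedge_mon (Finset.disjoint_left.mpr hd), hu]
  rw [show wsign T U = 1 by rw [wsign]; exact he.neg_one_pow, one_smul]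

lemma mwn {T U V : Finset (Fin 6)} (hd : ∀ x ∈ T, x ∉ U) (hu : T ∪ U = V)
    (ho : Odd ((T ×ˢ U).filter fun p => p.2 < p.1).card) :
    mon T ⋏ mon U = -mon V := by
  rw [mon_wedge_mon (Finset.disjoint_left.mpr hd), hu]
  rw [show wsign T U = -1 by rw [wsign]; exact ho.neg_one_pow, neg_one_smul]

lemma mw0 {T U : Finset (Fin 6)} (h : ∃ x ∈ T, x ∈ U) : mon T ⋏ mon U = 0 :=
  mon_wedge_mon_zero (fun hd => by obtain ⟨x, hx, hx'⟩ := h; exact (Finset.disjoint_left.mp hd hx) hx')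

example : mon {0} ⋏ mon {5} = mon ({0,5} : Finset (Fin 6)) := mwp (by decide) (by decide) (by decide)
example : mon {0,5} ⋏ mon {3} = -mon ({0,3,5} : Finset (Fin 6)) := mwn (by decide) (by decide) (by decide)
example : mon {0,3} ⋏ mon {0,3} = (0 : Lam) := mw0 (by decide)
example : mon {0,3,5} ⋏ mon {1,2,4} = -mon ({0,1,2,3,4,5} : Finset (Fin 6)) := mwn (by decide) (by decide) (by decide)

set_option maxHeartbeats 2000000 in
/-- for `t = 0`, `∂_0∂̄_0 ω = 0` and `∂_0∂̄_0(ω∧ω) = 0`: the standard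
invariant Hermitian metric on the Calabi–Eckmann manifold `S³×S³` is both SKT and
Gauduchon. -/
theorem stmt12 (D Db : Lam →ₗ[ℂ] Lam) (hD : IsDelT 0 D) (hDb : IsDelBarT 0 Db) :
    D (Db ω) = 0 ∧ D (Db (ω ⋏ ω)) = 0 := by
  obtain ⟨⟨hDg, hDL⟩, hD0, hD1, hD2, hD3, hD4, hD5⟩ := hD
  obtain ⟨⟨hDbg, hDbL⟩, hB0, hB1, hB2, hB3, hB4, hB5⟩ := hDb
  norm_num [φ] at hD0 hD1 hD2 hD3 hD4 hD5 hB0 hB1 hB2 hB3 hB4 hB5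
  -- pair products
  have p02 : mon {0} ⋏ mon {2} = mon ({0,2} : Finset (Fin 6)) := mwp (by decide) (by decide) (by decide)
  have p12 : mon {1} ⋏ mon {2} = mon ({1,2} : Finset (Fin 6)) := mwp (by decide) (by decide) (by decide)
  have n32 : mon {3} ⋏ mon {2} = -mon ({2,3} : Finset (Fin 6)) := mwn (by decide) (by decide) (by decide)
  have n42 : mon {4} ⋏ mon {2} = -mon ({2,4} : Finset (Fin 6)) := mwn (by decide) (by decide) (by decide)
  have n30 : mon {3} ⋏ mon {0} = -mon ({0,3} : Finset (Fin 6)) := mwn (by decide) (by decide) (by decide)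
  have n41 : mon {4} ⋏ mon {1} = -mon ({1,4} : Finset (Fin 6)) := mwn (by decide) (by decide) (by decide)
  have p05 : mon {0} ⋏ mon {5} = mon ({0,5} : Finset (Fin 6)) := mwp (by decide) (by decide) (by decide)
  have p15 : mon {1} ⋏ mon {5} = mon ({1,5} : Finset (Fin 6)) := mwp (by decide) (by decide) (by decide)
  have p03 : mon {0} ⋏ mon {3} = mon ({0,3} : Finset (Fin 6)) := mwp (by decide) (by decide) (by decide)
  have p14 : mon {1} ⋏ mon {4} = mon ({1,4} : Finset (Fin 6)) := mwp (by decide) (by decide) (by decide)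
  have p35 : mon {3} ⋏ mon {5} = mon ({3,5} : Finset (Fin 6)) := mwp (by decide) (by decide) (by decide)
  have p45 : mon {4} ⋏ mon {5} = mon ({4,5} : Finset (Fin 6)) := mwp (by decide) (by decide) (by decide)
  have p25 : mon {2} ⋏ mon {5} = mon ({2,5} : Finset (Fin 6)) := mwp (by decide) (by decide) (by decide)
  -- triple products
  have n053 : mon {0,5} ⋏ mon {3} = -mon ({0,3,5} : Finset (Fin 6)) := mwn (by decide) (by decide) (by decide)
  have p035 : mon {0} ⋏ mon {3,5} = mon ({0,3,5} : Finset (Fin 6)) := mwp (by decide) (by decide) (by decide)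
  have n154 : mon {1,5} ⋏ mon {4} = -mon ({1,4,5} : Finset (Fin 6)) := mwn (by decide) (by decide) (by decide)
  have p145 : mon {1} ⋏ mon {4,5} = mon ({1,4,5} : Finset (Fin 6)) := mwp (by decide) (by decide) (by decide)
  have q035 : mon {0,3} ⋏ mon {5} = mon ({0,3,5} : Finset (Fin 6)) := mwp (by decide) (by decide) (by decide)
  have q145 : mon {1,4} ⋏ mon {5} = mon ({1,4,5} : Finset (Fin 6)) := mwp (by decide) (by decide) (by decide)
  have p023 : mon {0,2} ⋏ mon {3} = mon ({0,2,3} : Finset (Fin 6)) := mwp (by decide) (by decide) (by decide)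
  have r023 : mon {0} ⋏ mon {2,3} = mon ({0,2,3} : Finset (Fin 6)) := mwp (by decide) (by decide) (by decide)
  have p124 : mon {1,2} ⋏ mon {4} = mon ({1,2,4} : Finset (Fin 6)) := mwp (by decide) (by decide) (by decide)
  have r124 : mon {1} ⋏ mon {2,4} = mon ({1,2,4} : Finset (Fin 6)) := mwp (by decide) (by decide) (by decide)
  have s023 : mon {2} ⋏ mon {0,3} = -mon ({0,2,3} : Finset (Fin 6)) := mwn (by decide) (by decide) (by decide)
  have s124 : mon {2} ⋏ mon {1,4} = -mon ({1,2,4} : Finset (Fin 6)) := mwn (by decide) (by decide) (by decide)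
  -- quadruple and top products
  have z0303 : mon {0,3} ⋏ mon ({0,3} : Finset (Fin 6)) = 0 := mw0 (by decide)
  have z1414 : mon {1,4} ⋏ mon ({1,4} : Finset (Fin 6)) = 0 := mw0 (by decide)
  have u0314 : mon {0,3} ⋏ mon {1,4} = -mon ({0,1,3,4} : Finset (Fin 6)) := mwn (by decide) (by decide) (by decide)
  have u1403 : mon {1,4} ⋏ mon {0,3} = -mon ({0,1,3,4} : Finset (Fin 6)) := mwn (by decide) (by decide) (by decide)
  have t1 : mon {0,3,5} ⋏ mon {0,2,3} = (0 : Lam) := mw0 (by decide)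
  have t2 : mon {0,3,5} ⋏ mon {1,2,4} = -mon ({0,1,2,3,4,5} : Finset (Fin 6)) := mwn (by decide) (by decide) (by decide)
  have t3 : mon {1,4,5} ⋏ mon {0,2,3} = -mon ({0,1,2,3,4,5} : Finset (Fin 6)) := mwn (by decide) (by decide) (by decide)
  have t4 : mon {1,4,5} ⋏ mon {1,2,4} = (0 : Lam) := mw0 (by decide)
  have t5 : mon {0,2,3} ⋏ mon {0,3,5} = (0 : Lam) := mw0 (by decide)
  have t6 : mon {0,2,3} ⋏ mon {1,4,5} = mon ({0,1,2,3,4,5} : Finset (Fin 6)) := mwp (by decide) (by decide) (by decide)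
  have t7 : mon {1,2,4} ⋏ mon {0,3,5} = mon ({0,1,2,3,4,5} : Finset (Fin 6)) := mwp (by decide) (by decide) (by decide)
  have t8 : mon {1,2,4} ⋏ mon {1,4,5} = (0 : Lam) := mw0 (by decide)
  -- clean up derivative values
  rw [p02] at hD0; rw [p12] at hD1; rw [n32] at hD3; rw [n42] at hD4; rw [n30, n41] at hD5
  rw [p05] at hB0; rw [p15] at hB1; rw [p03, p14] at hB2; rw [p35] at hB3; rw [p45] at hB4
  simp only [smul_neg, neg_neg] at hD3 hD4 hD5 hB1 hB2 hB3
  have hm : ∀ j : Fin 6, mon {j} ∈ Ldeg 1 := fun j => mon_mem_Ldeg (by simp)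
  have hω : ω = (Complex.I/2) • (mon {0,3} + mon {1,4} + mon {2,5}) := by
    simp only [ω, φ, p03, p14, p25]
  have hωdeg : ω ∈ Ldeg 2 := by
    rw [hω]
    exact Submodule.smul_mem _ _ (add_mem (add_mem (mon_mem_Ldeg (by decide))
      (mon_mem_Ldeg (by decide))) (mon_mem_Ldeg (by decide)))
  -- Db on the 2-form pieces
  have hB03 : Db (mon ({0,3} : Finset (Fin 6))) = 0 := by
    rw [← p03, hDbL 1 (mon {0}) (hm 0) (mon {3}), hB0, hB3]
    simp only [smul_wedge, wedge_smul, wedge_neg, neg_wedge, pow_one, neg_one_smul, smul_neg,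
      neg_neg, n053, p035]
    module
  have hB14 : Db (mon ({1,4} : Finset (Fin 6))) = 0 := by
    rw [← p14, hDbL 1 (mon {1}) (hm 1) (mon {4}), hB1, hB4]
    simp only [smul_wedge, wedge_smul, wedge_neg, neg_wedge, pow_one, neg_one_smul, smul_neg,
      neg_neg, n154, p145]
    module
  have hB25 : Db (mon ({2,5} : Finset (Fin 6))) = -(Complex.I • mon ({0,3,5} : Finset (Fin 6)))
      + mon ({1,4,5} : Finset (Fin 6)) := by
    rw [← p25, hDbL 1 (mon {2}) (hm 2) (mon {5}), hB2, hB5]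
    simp only [add_wedge, neg_wedge, smul_wedge, wedge_zero, smul_zero, pow_one, neg_one_smul,
      q035, q145, add_zero]
  -- D on the 2-form pieces
  have hD03 : D (mon ({0,3} : Finset (Fin 6))) = 0 := by
    rw [← p03, hDL 1 (mon {0}) (hm 0) (mon {3}), hD0, hD3]
    simp only [smul_wedge, wedge_smul, pow_one, neg_one_smul, p023, r023]
    module
  have hD14 : D (mon ({1,4} : Finset (Fin 6))) = 0 := by
    rw [← p14, hDL 1 (mon {1}) (hm 1) (mon {4}), hD1, hD4]
    simp only [smul_wedge, wedge_smul, pow_one, neg_one_smul, p124, r124]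
    module
  have hD25 : D (mon ({2,5} : Finset (Fin 6))) = -(Complex.I • mon ({0,2,3} : Finset (Fin 6)))
      + -mon ({1,2,4} : Finset (Fin 6)) := by
    rw [← p25, hDL 1 (mon {2}) (hm 2) (mon {5}), hD2, hD5]
    simp only [zero_wedge, zero_add, wedge_add, wedge_neg, wedge_smul, pow_one, neg_one_smul,
      smul_neg, neg_neg, s023, s124]
    module
  have hBω : Db ω = (Complex.I/2) • (-(Complex.I • mon ({0,3,5} : Finset (Fin 6)))
      + mon ({1,4,5} : Finset (Fin 6))) := by
    rw [hω, map_smul, map_add, map_add, hB03, hB14, hB25]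
    module
  have hDω : D ω = (Complex.I/2) • (-(Complex.I • mon ({0,2,3} : Finset (Fin 6)))
      + -mon ({1,2,4} : Finset (Fin 6))) := by
    rw [hω, map_smul, map_add, map_add, hD03, hD14, hD25]
    module
  -- D of the 3-form monomials appearing in Db ω
  have hT035 : D (mon ({0,3,5} : Finset (Fin 6))) = mon ({0,1,3,4} : Finset (Fin 6)) := by
    rw [← q035, hDL 2 (mon {0,3}) (mon_mem_Ldeg (by decide)) (mon {5}), hD03, hD5]
    simp only [zero_wedge, zero_add, wedge_add, wedge_neg, wedge_smul, smul_neg, neg_neg,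
      z0303, u0314, smul_zero]
    module
  have hT145 : D (mon ({1,4,5} : Finset (Fin 6))) = Complex.I • mon ({0,1,3,4} : Finset (Fin 6)) := by
    rw [← q145, hDL 2 (mon {1,4}) (mon_mem_Ldeg (by decide)) (mon {5}), hD14, hD5]
    simp only [zero_wedge, zero_add, wedge_add, wedge_neg, wedge_smul, smul_neg, neg_neg,
      z1414, u1403, smul_zero]
    module
  have part1 : D (Db ω) = 0 := by
    rw [hBω, map_smul, map_add, map_neg, map_smul, hT035, hT145]
    module
  refine ⟨part1, ?_⟩
  have hBdeg : Db ω ∈ Ldeg 3 := by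
    rw [hBω]
    exact Submodule.smul_mem _ _ (add_mem (neg_mem (Submodule.smul_mem _ _
      (mon_mem_Ldeg (by decide)))) (mon_mem_Ldeg (by decide)))
  rw [hDbL 2 ω hωdeg ω]
  simp only [show ((-1:ℂ))^2 = 1 by norm_num, one_smul]
  rw [map_add, hDL 3 (Db ω) hBdeg ω, hDL 2 ω hωdeg (Db ω), part1, zero_wedge, wedge_zero,
    smul_zero, add_zero, zero_add]
  rw [hBω, hDω]
  simp only [smul_wedge, wedge_smul, add_wedge, wedge_add, neg_wedge, wedge_neg, smul_neg,
    neg_neg, smul_zero, neg_zero, add_zero, zero_add, smul_add, smul_smul,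
    t1, t2, t3, t4, t5, t6, t7, t8]
  match_scalars
  ring_nf

end
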